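/- Let c > 0 and M > 0. Then there exists ᾱ ∈ (0, π/2] such that for all real numbers a, b, η₁, η₂, T, β, σ with 0 ≤ a ≤ M, 0 ≤ b ≤ M, |η₁| ≤ M, |η₂| ≤ M, 0 ≤ T, a − T ≥ c, β ∈ (0, 1/2], σ ∈ (0, 1), and for every α ∈ [0, ᾱ]: a(1 − sin α) + b sin α − η₁ sin α (1 − cos α) + η₂ (1 − cos α)² − T(1 − 2β(1−σ) sin α) ≥ 0. -/

import Mathlib

/-- Uniform positivity estimate for the neighborhood condition: there exists
`ᾱ ∈ (0, π/2]` such that for all bounded data with `a − T ≥ c` the expression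
`a(1 − sin α) + b sin α − η₁ sin α (1 − cos α) + η₂ (1 − cos α)² − T(1 − 2β(1−σ) sin α)`
is nonnegative for all `α ∈ [0, ᾱ]`. -/
theorem hat_alpha_uniform (c M : ℝ) (hc : 0 < c) (hM : 0 < M) :
    ∃ αbar ∈ Set.Ioc (0 : ℝ) (Real.pi / 2),
      ∀ a b η₁ η₂ T β σ : ℝ,
        0 ≤ a → a ≤ M → 0 ≤ b → b ≤ M → |η₁| ≤ M → |η₂| ≤ M →
        0 ≤ T → c ≤ a - T →
        β ∈ Set.Ioc (0 : ℝ) (1 / 2) → σ ∈ Set.Ioo (0 : ℝ) 1 →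
        ∀ α ∈ Set.Icc (0 : ℝ) αbar,
          0 ≤ a * (1 - Real.sin α) + b * Real.sin α
            - η₁ * Real.sin α * (1 - Real.cos α)
            + η₂ * (1 - Real.cos α) ^ 2
            - T * (1 - 2 * β * (1 - σ) * Real.sin α) := by
  set ε : ℝ := c / (3 * M) with hε
  have hεpos : 0 < ε := by positivity
  refine ⟨min (Real.pi / 2) (min 1 ε), ⟨?_, min_le_left _ _⟩, ?_⟩
  · exact lt_min (by positivity) (lt_min one_pos hεpos)
  intro a b η₁ η₂ T β σ ha0 haM hb0 hbM hη₁ hη₂ hT0 hcaT hβ hσ α hα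
  obtain ⟨hα0, hαb⟩ := hα
  have hαpi : α ≤ Real.pi / 2 := hαb.trans (min_le_left _ _)
  have hα1 : α ≤ 1 := hαb.trans ((min_le_right _ _).trans (min_le_left _ _))
  have hαε : α ≤ ε := hαb.trans ((min_le_right _ _).trans (min_le_right _ _))
  have hs0 : 0 ≤ Real.sin α := Real.sin_nonneg_of_nonneg_of_le_pi hα0
    (hαpi.trans (by linarith [Real.pi_pos]))
  have hsα : Real.sin α ≤ α := Real.sin_le hα0
  have hsε : Real.sin α ≤ ε := hsα.trans hαε
  have hc0 : 0 ≤ 1 - Real.cos α := by linarith [Real.cos_le_one α]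
  have hc1 : 1 - Real.cos α ≤ 1 := by
    have : 0 ≤ Real.cos α := Real.cos_nonneg_of_mem_Icc
      ⟨by linarith [Real.pi_pos], hαpi⟩
    linarith
  have hcε : 1 - Real.cos α ≤ ε := by
    have h2 : 1 - Real.cos α ≤ α ^ 2 / 2 := by
      have hct := Real.cos_two_mul (α / 2)
      rw [show 2 * (α / 2) = α by ring] at hct
      have hs2 : Real.sin (α / 2) ≤ α / 2 := Real.sin_le (by linarith)
      have hs2' : 0 ≤ Real.sin (α / 2) := Real.sin_nonneg_of_nonneg_of_le_pi
        (by linarith) (by nlinarith [Real.pi_gt_three])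
      nlinarith [Real.sin_sq_add_cos_sq (α / 2)]
    nlinarith
  have hMε : 3 * (M * ε) = c := by
    rw [hε]; field_simp
  have hη₁' := abs_le.mp hη₁
  have hη₂' := abs_le.mp hη₂
  have hβσ : 0 ≤ 2 * β * (1 - σ) * Real.sin α :=
    mul_nonneg (mul_nonneg (mul_nonneg two_pos.le hβ.1.le) (by linarith [hσ.2])) hs0
  have hTs : 0 ≤ T * (2 * β * (1 - σ) * Real.sin α) := mul_nonneg hT0 hβσ
  have hAs : a * Real.sin α ≤ M * ε :=
    mul_le_mul haM hsε hs0 hM.le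
  have hb1 : |η₁ * Real.sin α * (1 - Real.cos α)| ≤ M * ε := by
    rw [abs_mul, abs_mul, abs_of_nonneg hs0, abs_of_nonneg hc0]
    calc |η₁| * Real.sin α * (1 - Real.cos α) ≤ M * ε * 1 := by
          apply mul_le_mul (mul_le_mul hη₁ hsε hs0 hM.le) hc1 hc0
          positivity
      _ = M * ε := by ring
  have hb2 : |η₂ * (1 - Real.cos α) ^ 2| ≤ M * ε := by
    rw [abs_mul, abs_pow, abs_of_nonneg hc0]
    calc |η₂| * (1 - Real.cos α) ^ 2 ≤ M * (ε * 1) := by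
          apply mul_le_mul hη₂ _ (by positivity) hM.le
          rw [sq]; exact mul_le_mul hcε hc1 hc0 hεpos.le
      _ = M * ε := by ring
  have h1 := abs_le.mp hb1
  have h2 := abs_le.mp hb2
  have hbs : 0 ≤ b * Real.sin α := mul_nonneg hb0 hs0
  nlinarith [h1.1, h1.2, h2.1, h2.2, hAs, hbs, hTs, hMε]
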